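/- An optimal solution to the ensemble post-processing problem exists that is an extreme point of the feasible polytope; in particular, there exists an optimal equalized-odds derived predictor whose parameter vector $(p_{\bar{y}a})$ has at most $2$ coordinates strictly between $0$ and $1$ (all other coordinates being $0$ or $1$), since the polytope in $[0,1]^{2^{S+1}}$ is cut out by only $2$ additional linear equality constraints. -/

import Mathlib

open Finset
open scoped Classical

/-- Probability of an event under a pmf `P` on a finite sample space. -/
noncomputable def pr {Ω : Type} [Fintype Ω] (P : Ω → ℝ) (E : Ω → Prop) : ℝ :=
  ∑ ω, if E ω then P ω else 0

/-- Conditional probability `Pr(E | F)`. -/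
noncomputable def cpr {Ω : Type} [Fintype Ω] (P : Ω → ℝ) (E F : Ω → Prop) : ℝ :=
  pr P (fun ω => E ω ∧ F ω) / pr P F

section Abstract

variable {E : Type} [Fintype E]

/-- Linear objective. -/
noncomputable def lpObj (w : E → ℝ) (p : E → ℝ) : ℝ := ∑ z, w z * p z

/-- Feasible polytope cut out by the box `[0,1]^E` and two linear equality constraints. -/
def lpFeas (c : Bool → E → ℝ) : Set (E → ℝ) :=
  {p | (∀ z, 0 ≤ p z ∧ p z ≤ 1) ∧ ∀ y : Bool, ∑ z, c y z * p z = 0}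

/-- Fractional coordinates of a point. -/
noncomputable def fracSet (p : E → ℝ) : Finset E :=
  Finset.univ.filter (fun z => p z ≠ 0 ∧ p z ≠ 1)

lemma exists_kernel_vec (c : Bool → E → ℝ) (K : Finset E) (hK : 3 ≤ K.card) :
    ∃ v : E → ℝ, (∀ z, z ∉ K → v z = 0) ∧ (∃ z, v z ≠ 0) ∧
      ∀ y : Bool, ∑ z, c y z * v z = 0 := by
  classical
  let Φ : (↥K → ℝ) →ₗ[ℝ] (Bool → ℝ) :=
    { toFun := fun f y => ∑ z : ↥K, c y z * f z
      map_add' := by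
        intro f g; funext y
        simp [mul_add, Finset.sum_add_distrib]
      map_smul' := by
        intro r f; funext y
        simp [Finset.mul_sum, mul_left_comm] }
  have hrank : Module.finrank ℝ (Bool → ℝ) < Module.finrank ℝ (↥K → ℝ) := by
    rw [Module.finrank_pi, Module.finrank_pi, Fintype.card_coe, Fintype.card_bool]
    omega
  have hninj : ¬ Function.Injective Φ := by
    intro h
    have := LinearMap.finrank_le_finrank_of_injective h
    omega
  rw [Function.not_injective_iff] at hninj
  obtain ⟨f, g, hfg, hne⟩ := hninj
  set v0 : ↥K → ℝ := f - g with hv0def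
  have hv0ne : v0 ≠ 0 := sub_ne_zero.mpr hne
  have hΦv0 : Φ v0 = 0 := by rw [hv0def, map_sub, hfg, sub_self]
  refine ⟨fun z => if h : z ∈ K then v0 ⟨z, h⟩ else 0, ?_, ?_, ?_⟩
  · intro z hz; simp [hz]
  · obtain ⟨z, hz⟩ : ∃ z, v0 z ≠ 0 := by
      by_contra h
      push_neg at h
      exact hv0ne (funext fun z => h z)
    exact ⟨(z : E), by simpa [z.2] using hz⟩
  · intro y
    have h1 : ∑ z, c y z * (if h : z ∈ K then v0 ⟨z, h⟩ else 0)
        = ∑ z ∈ K, c y z * (if h : z ∈ K then v0 ⟨z, h⟩ else 0) := by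
      refine (Finset.sum_subset (Finset.subset_univ K) ?_).symm
      intro z _ hz; simp [hz]
    have h2 : ∑ z ∈ K, c y z * (if h : z ∈ K then v0 ⟨z, h⟩ else 0)
        = ∑ z : ↥K, c y z * v0 z := by
      rw [← Finset.sum_attach K (fun z => c y z * (if h : z ∈ K then v0 ⟨z, h⟩ else 0))]
      refine Finset.sum_congr rfl ?_
      intro z _
      simp [z.2]
    rw [h1, h2]
    have := congrFun hΦv0 y
    exact this

lemma lp_exchange (c : Bool → E → ℝ) (w : E → ℝ) (p : E → ℝ)
    (hp : p ∈ lpFeas c) (hmin : ∀ q ∈ lpFeas c, lpObj w p ≤ lpObj w q)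
    (hcard : 3 ≤ (fracSet p).card) :
    ∃ q ∈ lpFeas c, (∀ r ∈ lpFeas c, lpObj w q ≤ lpObj w r) ∧
      (fracSet q).card < (fracSet p).card := by
  classical
  set K := fracSet p with hKdef
  obtain ⟨v, hv0, hvne, hvker, hdir⟩ :
      ∃ v : E → ℝ, (∀ z, z ∉ K → v z = 0) ∧ (∃ z, v z ≠ 0) ∧
        (∀ y : Bool, ∑ z, c y z * v z = 0) ∧ ∑ z, w z * v z ≤ 0 := by
    obtain ⟨v, hv0, hvne, hvker⟩ := exists_kernel_vec c K hcard
    rcases le_or_gt (∑ z, w z * v z) 0 with h | h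
    · exact ⟨v, hv0, hvne, hvker, h⟩
    · obtain ⟨z₀, hz₀⟩ := hvne
      refine ⟨fun z => -v z, fun z hz => by simp [hv0 z hz], ⟨z₀, by simpa using hz₀⟩,
        fun y => ?_, ?_⟩
      · simp only [mul_neg]
        rw [Finset.sum_neg_distrib, hvker y, neg_zero]
      · simp only [mul_neg]
        rw [Finset.sum_neg_distrib]
        linarith
  obtain ⟨z₀, hz₀⟩ := hvne
  set supp : Finset E := Finset.univ.filter (fun z => v z ≠ 0) with hsuppdef
  have hz₀supp : z₀ ∈ supp := by simp [hsuppdef, hz₀]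
  have hsupp_ne : supp.Nonempty := ⟨z₀, hz₀supp⟩
  have hsuppK : ∀ z ∈ supp, z ∈ K := by
    intro z hz
    simp only [hsuppdef, Finset.mem_filter] at hz
    by_contra hzK
    exact hz.2 (hv0 z hzK)
  have hfrac : ∀ z ∈ K, 0 < p z ∧ p z < 1 := by
    intro z hz
    simp only [hKdef, fracSet, Finset.mem_filter] at hz
    exact ⟨lt_of_le_of_ne (hp.1 z).1 (Ne.symm hz.2.1), lt_of_le_of_ne (hp.1 z).2 hz.2.2⟩
  set step : E → ℝ := fun z => if 0 < v z then (1 - p z) / v z else p z / (-v z) with hstepdef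
  have hstep_pos : ∀ z ∈ supp, 0 < step z := by
    intro z hz
    obtain ⟨hp0, hp1⟩ := hfrac z (hsuppK z hz)
    have hvz : v z ≠ 0 := by simpa [hsuppdef] using hz
    rcases lt_or_gt_of_ne hvz with h | h
    · have : ¬ (0 < v z) := by linarith
      simp only [hstepdef, this, if_false]
      exact div_pos hp0 (by linarith)
    · simp only [hstepdef, h, if_true]
      exact div_pos (by linarith) h
  set t : ℝ := supp.inf' hsupp_ne step with htdef
  have ht_pos : 0 < t := by
    rw [htdef, Finset.lt_inf'_iff]
    exact hstep_pos
  have ht_le : ∀ z ∈ supp, t ≤ step z := fun z hz => Finset.inf'_le step hz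
  set q : E → ℝ := fun z => p z + t * v z with hqdef
  -- coordinate bounds for q
  have hqbounds : ∀ z, 0 ≤ q z ∧ q z ≤ 1 := by
    intro z
    by_cases hvz : v z = 0
    · simp only [hqdef, hvz, mul_zero, add_zero]
      exact hp.1 z
    · have hzsupp : z ∈ supp := by simp [hsuppdef, hvz]
      obtain ⟨hp0, hp1⟩ := hfrac z (hsuppK z hzsupp)
      have htle := ht_le z hzsupp
      rcases lt_or_gt_of_ne hvz with h | h
      · -- v z < 0
       have hnot : ¬ (0 < v z) := by linarith
       have hstep : step z = p z / (-v z) := by simp [hstepdef, hnot]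
       rw [hstep] at htle
       have h1 : t * (-v z) ≤ p z := by
         rw [← le_div_iff₀ (by linarith : (0:ℝ) < -v z)]
         exact htle
       constructor
       · simp only [hqdef]; nlinarith
       · simp only [hqdef]; nlinarith
      · -- 0 < v z
       have hstep : step z = (1 - p z) / v z := by simp [hstepdef, h]
       rw [hstep] at htle
       have h1 : t * v z ≤ 1 - p z := by
         rw [← le_div_iff₀ h]
         exact htle
       constructor
       · simp only [hqdef]; nlinarith
       · simp only [hqdef]; linarith
  have hsum_split : ∀ (u : E → ℝ), ∑ z, u z * q z = ∑ z, u z * p z + t * ∑ z, u z * v z := by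
    intro u
    rw [Finset.mul_sum, ← Finset.sum_add_distrib]
    refine Finset.sum_congr rfl ?_
    intro z _
    simp only [hqdef]
    ring
  have hqF : q ∈ lpFeas c := by
    refine ⟨hqbounds, ?_⟩
    intro y
    rw [hsum_split (c y), hp.2 y, hvker y, mul_zero, add_zero]
  have hqobj : lpObj w q ≤ lpObj w p := by
    simp only [lpObj]
    rw [hsum_split w]
    nlinarith [mul_nonpos_of_nonneg_of_nonpos (le_of_lt ht_pos) hdir]
  have hqmin : ∀ r ∈ lpFeas c, lpObj w q ≤ lpObj w r :=
    fun r hr => le_trans hqobj (hmin r hr)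
  refine ⟨q, hqF, hqmin, ?_⟩
  have hsub : fracSet q ⊆ K := by
    intro z hz
    simp only [fracSet, Finset.mem_filter] at hz
    by_contra hzK
    have hvz : v z = 0 := hv0 z hzK
    have hqz : q z = p z := by simp [hqdef, hvz]
    have : z ∉ fracSet p := by rwa [hKdef] at hzK
    simp only [fracSet, Finset.mem_filter] at this
    push_neg at this
    rcases Classical.em (p z = 0) with h0 | h0
    · exact hz.2.1 (by rw [hqz, h0])
    · exact hz.2.2 (by rw [hqz, this (Finset.mem_univ z) h0])
  obtain ⟨z₁, hz₁supp, hz₁eq⟩ := Finset.exists_mem_eq_inf' hsupp_ne step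
  have hz₁K : z₁ ∈ K := hsuppK z₁ hz₁supp
  have hvz₁ : v z₁ ≠ 0 := by simpa [hsuppdef] using hz₁supp
  have hz₁not : z₁ ∉ fracSet q := by
    have htz₁ : t = step z₁ := hz₁eq
    rcases lt_or_gt_of_ne hvz₁ with h | h
    · have hnot : ¬ (0 < v z₁) := by linarith
      have : q z₁ = 0 := by
        simp only [hqdef, htz₁, hstepdef, hnot, if_false]
        have h2 : p z₁ / (-v z₁) * v z₁ = -p z₁ := by
          rw [div_mul_eq_mul_div, mul_div_assoc, div_neg, div_self hvz₁]
          ring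
        linarith
      simp [fracSet, this]
    · have : q z₁ = 1 := by
        simp only [hqdef, htz₁, hstepdef, h, if_true]
        field_simp
        ring
      simp [fracSet, this]
  refine Finset.card_lt_card ?_
  rw [Finset.ssubset_iff_of_subset hsub]
  exact ⟨z₁, hz₁K, hz₁not⟩

lemma lp_main (c : Bool → E → ℝ) (w : E → ℝ) :
    ∃ p ∈ lpFeas c, (∀ q ∈ lpFeas c, lpObj w p ≤ lpObj w q) ∧ (fracSet p).card ≤ 2 := by
  classical
  have hF_ne : (lpFeas c).Nonempty := ⟨0, fun z => by norm_num, fun y => by simp⟩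
  have hclosed : IsClosed (lpFeas c) := by
    have heq : lpFeas c =
        (⋂ z, ({p : E → ℝ | 0 ≤ p z} ∩ {p : E → ℝ | p z ≤ 1})) ∩
          ⋂ y : Bool, {p : E → ℝ | ∑ z, c y z * p z = 0} := by
      ext p
      simp only [lpFeas, Set.mem_setOf_eq, Set.mem_inter_iff, Set.mem_iInter,
        Set.mem_setOf_eq]
    rw [heq]
    refine IsClosed.inter (isClosed_iInter fun z => ?_) (isClosed_iInter fun y => ?_)
    · exact (isClosed_le continuous_const (continuous_apply z)).inter
        (isClosed_le (continuous_apply z) continuous_const)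
    · exact isClosed_eq (continuous_finset_sum _ fun z _ =>
        continuous_const.mul (continuous_apply z)) continuous_const
  have hsub : lpFeas c ⊆ Set.Icc (0 : E → ℝ) 1 := by
    intro p hp
    constructor
    · intro z; exact (hp.1 z).1
    · intro z; exact (hp.1 z).2
  have hcomp : IsCompact (lpFeas c) :=
    IsCompact.of_isClosed_subset isCompact_Icc hclosed hsub
  have hcont : Continuous (lpObj w) :=
    continuous_finset_sum _ fun z _ => continuous_const.mul (continuous_apply z)
  obtain ⟨p₀, hp₀F, hp₀min⟩ := hcomp.exists_isMinOn hF_ne hcont.continuousOn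
  have hp₀min' : ∀ q ∈ lpFeas c, lpObj w p₀ ≤ lpObj w q := fun q hq => hp₀min hq
  have hT : ∃ n, ∃ p ∈ lpFeas c,
      (∀ q ∈ lpFeas c, lpObj w p ≤ lpObj w q) ∧ (fracSet p).card = n :=
    ⟨(fracSet p₀).card, p₀, hp₀F, hp₀min', rfl⟩
  obtain ⟨p, hpF, hpmin, hpn⟩ := Nat.find_spec hT
  refine ⟨p, hpF, hpmin, ?_⟩
  by_contra hgt
  push_neg at hgt
  obtain ⟨q, hqF, hqmin, hqlt⟩ := lp_exchange c w p hpF hpmin (by omega)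
  have hlt : (fracSet q).card < Nat.find hT := by omega
  exact Nat.find_min hT hlt ⟨q, hqF, hqmin, rfl⟩

end Abstract

/-- The ensemble post-processing LP admits an optimal solution at an extreme
point of the feasible polytope; in particular there is an optimal equalized-odds parameter
vector with at most 2 coordinates strictly between 0 and 1. -/
theorem optimal_vertex_few_fractional {Ω : Type} [Fintype Ω] (P : Ω → ℝ)
    (hP0 : ∀ ω, 0 ≤ P ω) (hP1 : ∑ ω, P ω = 1)
    (S : ℕ) (Yhat : Fin S → Ω → Bool) (A Y : Ω → Bool)
    (hpos : ∀ a y : Bool, 0 < pr P (fun ω => A ω = a ∧ Y ω = y))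
    (F : Set ((Fin S → Bool) → Bool → ℝ))
    (hF : F = {p | (∀ (yb : Fin S → Bool) (a : Bool), 0 ≤ p yb a ∧ p yb a ≤ 1) ∧
      ∀ y : Bool,
        (∑ yb : Fin S → Bool,
          cpr P (fun ω => ∀ i, Yhat i ω = yb i) (fun ω => Y ω = y ∧ A ω = false) *
            p yb false) =
        (∑ yb : Fin S → Bool,
          cpr P (fun ω => ∀ i, Yhat i ω = yb i) (fun ω => Y ω = y ∧ A ω = true) *
            p yb true)})
    (L : ((Fin S → Bool) → Bool → ℝ) → ℝ)
    (hL : L = fun p => ∑ yb : Fin S → Bool, ∑ a : Bool,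
      (p yb a * pr P (fun ω => (∀ i, Yhat i ω = yb i) ∧ A ω = a ∧ Y ω = false)
        + (1 - p yb a) *
          pr P (fun ω => (∀ i, Yhat i ω = yb i) ∧ A ω = a ∧ Y ω = true))) :
    ∃ p ∈ F, (∀ q ∈ F, L p ≤ L q) ∧
      ((Finset.univ : Finset ((Fin S → Bool) × Bool)).filter
        (fun z => p z.1 z.2 ≠ 0 ∧ p z.1 z.2 ≠ 1)).card ≤ 2 := by
  classical
  set c : Bool → ((Fin S → Bool) × Bool) → ℝ := fun y z =>
    (if z.2 then (-1 : ℝ) else 1) *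
      cpr P (fun ω => ∀ i, Yhat i ω = z.1 i) (fun ω => Y ω = y ∧ A ω = z.2) with hcdef
  set w : ((Fin S → Bool) × Bool) → ℝ := fun z =>
    pr P (fun ω => (∀ i, Yhat i ω = z.1 i) ∧ A ω = z.2 ∧ Y ω = false)
      - pr P (fun ω => (∀ i, Yhat i ω = z.1 i) ∧ A ω = z.2 ∧ Y ω = true) with hwdef
  set C : ℝ := ∑ z : (Fin S → Bool) × Bool,
    pr P (fun ω => (∀ i, Yhat i ω = z.1 i) ∧ A ω = z.2 ∧ Y ω = true) with hCdef
  -- constraint translation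
  have hconstr : ∀ (p : (Fin S → Bool) → Bool → ℝ) (y : Bool),
      ∑ z : (Fin S → Bool) × Bool, c y z * p z.1 z.2
        = (∑ yb : Fin S → Bool,
            cpr P (fun ω => ∀ i, Yhat i ω = yb i) (fun ω => Y ω = y ∧ A ω = false) *
              p yb false)
          - (∑ yb : Fin S → Bool,
            cpr P (fun ω => ∀ i, Yhat i ω = yb i) (fun ω => Y ω = y ∧ A ω = true) *
              p yb true) := by
    intro p y
    rw [Fintype.sum_prod_type, ← Finset.sum_sub_distrib]
    refine Finset.sum_congr rfl ?_
    intro yb _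
    rw [Fintype.sum_bool]
    simp only [hcdef]
    norm_num
    ring
  have hmem : ∀ p : (Fin S → Bool) → Bool → ℝ,
      p ∈ F ↔ (fun z : (Fin S → Bool) × Bool => p z.1 z.2) ∈ lpFeas c := by
    intro p
    rw [hF]
    simp only [lpFeas, Set.mem_setOf_eq]
    constructor
    · rintro ⟨h1, h2⟩
      refine ⟨fun z => h1 z.1 z.2, fun y => ?_⟩
      rw [hconstr p y, h2 y, sub_self]
    · rintro ⟨h1, h2⟩
      refine ⟨fun yb a => h1 (yb, a), fun y => ?_⟩
      have := h2 y
      rw [hconstr p y] at this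
      linarith [this]
  -- objective translation
  have hobj : ∀ p : (Fin S → Bool) → Bool → ℝ,
      L p = C + lpObj w (fun z : (Fin S → Bool) × Bool => p z.1 z.2) := by
    intro p
    rw [hL]
    simp only [lpObj, hCdef, ← Finset.sum_add_distrib]
    rw [Fintype.sum_prod_type]
    refine Finset.sum_congr rfl ?_
    intro yb _
    rw [Fintype.sum_bool, Fintype.sum_bool]
    simp only [hwdef]
    ring
  obtain ⟨p', hp'F, hp'min, hp'card⟩ := lp_main c w
  refine ⟨fun yb a => p' (yb, a), ?_, ?_, ?_⟩
  · rw [hmem]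
    convert hp'F using 1
  · intro q hq
    rw [hobj, hobj]
    have hq' := (hmem q).mp hq
    have := hp'min _ hq'
    have heq : (fun z : (Fin S → Bool) × Bool => p' (z.1, z.2)) = p' := by
      funext z; rfl
    rw [heq]
    linarith
  · have heq : ((Finset.univ : Finset ((Fin S → Bool) × Bool)).filter
        (fun z => p' (z.1, z.2) ≠ 0 ∧ p' (z.1, z.2) ≠ 1)) = fracSet p' := by
      simp only [fracSet]
    rw [heq]
    exact hp'card
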